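/- Let X be a real random variable with Gaussian distribution N(μ, σ²), where μ ∈ ℝ and σ > 0, let α = μ/σ, and let Z = max(0, X). Then Var[Z] = (μ² + σ²) Φ(α) + μσ φ(α) − (σ φ(α) + μ Φ(α))², where φ and Φ are the standard normal density and cumulative distribution function. Equivalently, E[Z²] = (μ² + σ²) Φ(α) + μσ φ(α). -/

import Mathlib

open MeasureTheory ProbabilityTheory

/-- The standard normal probability density function. -/
noncomputable def stdNormalPDF (t : ℝ) : ℝ :=
  (Real.sqrt (2 * Real.pi))⁻¹ * Real.exp (-t ^ 2 / 2)

/-- The standard normal cumulative distribution function. -/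
noncomputable def stdNormalCDF (z : ℝ) : ℝ :=
  ∫ t in Set.Iic z, stdNormalPDF t

open Real Set Filter
open scoped NNReal ENNReal

lemma phi_eq : stdNormalPDF = fun t => (Real.sqrt (2 * Real.pi))⁻¹ * Real.exp (-(1/2) * t ^ 2) := by
  funext t; unfold stdNormalPDF; ring_nf

lemma phi_gauss : ∀ t, gaussianPDFReal 0 1 t = stdNormalPDF t := by
  intro t
  simp [gaussianPDFReal, stdNormalPDF]

lemma phi_even (t : ℝ) : stdNormalPDF (-t) = stdNormalPDF t := by
  simp [stdNormalPDF]

lemma integrable_pow_phi (n : ℕ) : Integrable (fun t => t ^ n * stdNormalPDF t) := by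
  rw [phi_eq]
  have h := integrable_rpow_mul_exp_neg_mul_sq (b := 1/2) (by norm_num) (s := (n:ℝ))
    (by exact_mod_cast lt_of_lt_of_le neg_one_lt_zero (Nat.cast_nonneg n))
  exact (h.const_mul ((Real.sqrt (2 * Real.pi))⁻¹)).congr (Eventually.of_forall fun t => by
    simp only [Real.rpow_natCast]; ring)

lemma integrable_phi : Integrable stdNormalPDF := by
  simpa using integrable_pow_phi 0

lemma hasDerivAt_phi (t : ℝ) : HasDerivAt stdNormalPDF (-t * stdNormalPDF t) t := by
  unfold stdNormalPDF
  have h : HasDerivAt (fun t : ℝ => -t ^ 2 / 2) (-t) t := by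
    have := ((hasDerivAt_pow 2 t).neg.div_const 2)
    refine this.congr_deriv ?_
    norm_num
    ring
  have := (h.exp.const_mul ((Real.sqrt (2 * Real.pi))⁻¹))
  refine this.congr_deriv ?_
  ring

lemma tendsto_phi : Tendsto stdNormalPDF atTop (nhds 0) := by
  unfold stdNormalPDF
  rw [show (0:ℝ) = (Real.sqrt (2 * Real.pi))⁻¹ * 0 by ring]
  refine Tendsto.const_mul _ ?_
  refine Real.tendsto_exp_atBot.comp ?_
  refine Tendsto.atBot_div_const (by norm_num) ?_
  exact tendsto_neg_atBot_iff.mpr (tendsto_pow_atTop (by norm_num))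

lemma tendsto_mul_phi : Tendsto (fun t => t * stdNormalPDF t) atTop (nhds 0) := by
  have hg : Tendsto (fun t : ℝ => (Real.sqrt (2 * Real.pi))⁻¹ * (2 * ((t/2) * Real.exp (-(t/2)))))
      atTop (nhds 0) := by
    rw [show (0:ℝ) = (Real.sqrt (2 * Real.pi))⁻¹ * (2 * 0) by ring]
    refine Tendsto.const_mul _ (Tendsto.const_mul _ ?_)
    have h1 := (tendsto_pow_mul_exp_neg_atTop_nhds_zero 1).comp
      (Tendsto.atTop_div_const (r := (2:ℝ)) (by norm_num) tendsto_id)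
    simpa [Function.comp_def] using h1
  refine squeeze_zero' ?_ ?_ hg
  · filter_upwards [eventually_ge_atTop (0:ℝ)] with t ht
    have : 0 < stdNormalPDF t := by
      unfold stdNormalPDF
      positivity
    positivity
  · filter_upwards [eventually_ge_atTop (1:ℝ)] with t ht
    unfold stdNormalPDF
    have h1 : Real.exp (-t^2/2) ≤ Real.exp (-(t/2)) := by
      apply Real.exp_le_exp.mpr
      nlinarith
    have h2 : (0:ℝ) < (Real.sqrt (2 * Real.pi))⁻¹ := by positivity
    calc t * ((Real.sqrt (2 * Real.pi))⁻¹ * Real.exp (-t^2/2))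
        ≤ t * ((Real.sqrt (2 * Real.pi))⁻¹ * Real.exp (-(t/2))) := by
          apply mul_le_mul_of_nonneg_left (by nlinarith [Real.exp_pos (-t^2/2)]) (by linarith)
      _ = (Real.sqrt (2 * Real.pi))⁻¹ * (2 * ((t/2) * Real.exp (-(t/2)))) := by ring

lemma int_phi_Ioi (a : ℝ) : ∫ t in Ioi a, stdNormalPDF t = stdNormalCDF (-a) := by
  unfold stdNormalCDF
  rw [← integral_comp_neg_Ioi]
  simp only [phi_even]

lemma int_t_phi_Ioi (a : ℝ) : ∫ t in Ioi a, t * stdNormalPDF t = stdNormalPDF a := by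
  have h := integral_Ioi_of_hasDerivAt_of_tendsto' (a := a)
    (f := fun t => -stdNormalPDF t) (f' := fun t => t * stdNormalPDF t)
    (fun x _ => by have := (hasDerivAt_phi x).neg; simp only [neg_mul, neg_neg] at this; exact this)
    (((integrable_pow_phi 1).congr (Eventually.of_forall fun t => by simp only [Pi.add_apply]; ring)).integrableOn)
    (by simpa using tendsto_phi.neg)
  simpa using h

lemma int_t2_phi_Ioi (a : ℝ) :
    ∫ t in Ioi a, t ^ 2 * stdNormalPDF t = stdNormalCDF (-a) + a * stdNormalPDF a := by
  have hint2 : Integrable (fun t => t ^ 2 * stdNormalPDF t) := integrable_pow_phi 2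
  have hd : ∀ x : ℝ, HasDerivAt (fun t => -(t * stdNormalPDF t))
      (x ^ 2 * stdNormalPDF x - stdNormalPDF x) x := by
    intro x
    have := ((hasDerivAt_id x).mul (hasDerivAt_phi x)).neg
    refine this.congr_deriv ?_
    simp only [id_eq]
    ring
  have h := integral_Ioi_of_hasDerivAt_of_tendsto' (a := a)
    (f := fun t => -(t * stdNormalPDF t))
    (f' := fun t => t ^ 2 * stdNormalPDF t - stdNormalPDF t)
    (fun x _ => hd x)
    ((hint2.sub integrable_phi).integrableOn)
    (by simpa using tendsto_mul_phi.neg)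
  rw [integral_sub hint2.integrableOn integrable_phi.integrableOn, int_phi_Ioi] at h
  linarith

lemma phi_cont : Continuous stdNormalPDF := by
  unfold stdNormalPDF
  fun_prop

lemma gauss_eq_map (μ σ : ℝ) (hσ : 0 < σ) :
    gaussianReal μ ⟨σ^2, sq_nonneg σ⟩ = (gaussianReal 0 1).map (fun t => σ * t + μ) := by
  have h1 : (gaussianReal 0 1).map (σ * ·) = gaussianReal 0 ⟨σ^2, sq_nonneg σ⟩ := by
    rw [gaussianReal_map_const_mul σ]
    congr 1
    · ring
    · ext
      exact mul_one _
  have h2 : (fun t => σ * t + μ) = (· + μ) ∘ (σ * ·) := rfl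
  rw [h2, ← Measure.map_map (measurable_add_const μ) (measurable_const_mul σ), h1]
  erw [gaussianReal_map_add_const]
  congr 1
  ring

lemma integral_gauss01 (g : ℝ → ℝ) :
    ∫ x, g x ∂(gaussianReal 0 1) = ∫ x, g x * stdNormalPDF x := by
  rw [gaussianReal_of_var_ne_zero _ one_ne_zero]
  have hd : gaussianPDF 0 1 = fun x => ((Real.toNNReal (gaussianPDFReal 0 1 x) : ℝ≥0) : ℝ≥0∞) := rfl
  rw [hd, integral_withDensity_eq_integral_smul
    ((measurable_gaussianPDFReal 0 1).real_toNNReal) g]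
  congr 1
  funext x
  rw [NNReal.smul_def, smul_eq_mul, Real.coe_toNNReal _ (gaussianPDFReal_nonneg 0 1 x),
    phi_gauss, mul_comm]

lemma integral_gauss (μ σ : ℝ) (hσ : 0 < σ) (f : ℝ → ℝ) (hf : Measurable f) :
    ∫ x, f x ∂(gaussianReal μ ⟨σ^2, sq_nonneg σ⟩) = ∫ t, f (σ * t + μ) * stdNormalPDF t := by
  rw [gauss_eq_map μ σ hσ,
    integral_map (by fun_prop) hf.aestronglyMeasurable, integral_gauss01]

lemma max_sq_le (u : ℝ) : (max 0 u)^2 ≤ u^2 := by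
  rcases le_total 0 u with h | h
  · rw [max_eq_right h]
  · rw [max_eq_left h]
    simpa using sq_nonneg u

lemma moment2 (μ σ α : ℝ) (hσ : 0 < σ) (hα : α = μ / σ) :
    ∫ t, (max 0 (σ * t + μ))^2 * stdNormalPDF t
      = (μ^2 + σ^2) * stdNormalCDF α + μ * σ * stdNormalPDF α := by
  have hμ : μ = σ * α := by rw [hα]; field_simp
  subst hμ
  have hi1 : Integrable (fun t => t * stdNormalPDF t) := by
    simpa using integrable_pow_phi 1
  have hi2 : Integrable (fun t => t^2 * stdNormalPDF t) := integrable_pow_phi 2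
  have hbound : Integrable (fun t => (σ*t+σ*α)^2 * stdNormalPDF t) :=
    (((hi2.const_mul (σ^2)).add (hi1.const_mul (2*σ*(σ*α)))).add
      (integrable_phi.const_mul ((σ*α)^2))).congr (Eventually.of_forall fun t => by simp only [Pi.add_apply]; ring)
  have hmax : Integrable (fun t => (max 0 (σ*t+σ*α))^2 * stdNormalPDF t) := by
    refine hbound.mono' (Continuous.aestronglyMeasurable ?_) (Eventually.of_forall fun t => ?_)
    · exact ((continuous_const.max ((continuous_const.mul continuous_id).add
        continuous_const)).pow 2).mul phi_cont
    · have h0 : 0 ≤ stdNormalPDF t := by unfold stdNormalPDF; positivity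
      rw [Real.norm_of_nonneg (by positivity)]
      exact mul_le_mul_of_nonneg_right (max_sq_le _) h0
  have hsplit := intervalIntegral.integral_Iic_add_Ioi (b := -α) hmax.integrableOn hmax.integrableOn
  have hIic : ∫ t in Iic (-α), (max 0 (σ*t+σ*α))^2 * stdNormalPDF t = 0 := by
    have he : EqOn (fun t => (max 0 (σ*t+σ*α))^2 * stdNormalPDF t) (fun _ => (0:ℝ)) (Iic (-α)) := by
      intro t ht
      have hle : σ*t+σ*α ≤ 0 := by
        have : σ * t ≤ σ * (-α) := mul_le_mul_of_nonneg_left ht hσ.le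
        nlinarith
      simp [max_eq_left hle]
    rw [setIntegral_congr_fun measurableSet_Iic he, integral_zero]
  have hIoi : ∫ t in Ioi (-α), (max 0 (σ*t+σ*α))^2 * stdNormalPDF t
      = σ^2 * (∫ t in Ioi (-α), t^2 * stdNormalPDF t)
        + (2*σ*(σ*α)) * (∫ t in Ioi (-α), t * stdNormalPDF t)
        + (σ*α)^2 * (∫ t in Ioi (-α), stdNormalPDF t) := by
    have hcong : ∫ t in Ioi (-α), (max 0 (σ*t+σ*α))^2 * stdNormalPDF t
        = ∫ t in Ioi (-α), (σ^2*(t^2*stdNormalPDF t) + (2*σ*(σ*α))*(t*stdNormalPDF t)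
            + (σ*α)^2*stdNormalPDF t) := by
      refine setIntegral_congr_fun measurableSet_Ioi fun t ht => ?_
      have hge : 0 ≤ σ*t+σ*α := by
        have : σ * (-α) ≤ σ * t := mul_le_mul_of_nonneg_left (le_of_lt ht) hσ.le
        nlinarith
      simp only [max_eq_right hge]
      ring
    have hA : IntegrableOn (fun t => σ^2*(t^2*stdNormalPDF t)
        + (2*σ*(σ*α))*(t*stdNormalPDF t)) (Ioi (-α)) :=
      ((hi2.const_mul (σ^2)).add (hi1.const_mul (2*σ*(σ*α)))).integrableOn
    rw [hcong, integral_add hA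
        ((integrable_phi.const_mul ((σ*α)^2)).integrableOn),
      integral_add ((hi2.const_mul (σ^2)).integrableOn) ((hi1.const_mul (2*σ*(σ*α))).integrableOn),
      integral_const_mul, integral_const_mul, integral_const_mul]
  rw [int_t2_phi_Ioi, int_t_phi_Ioi, int_phi_Ioi, neg_neg, phi_even] at hIoi
  rw [hIic, hIoi] at hsplit
  rw [← hsplit]
  ring

lemma moment1 (μ σ α : ℝ) (hσ : 0 < σ) (hα : α = μ / σ) :
    ∫ t, (max 0 (σ * t + μ)) * stdNormalPDF t
      = σ * stdNormalPDF α + μ * stdNormalCDF α := by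
  have hμ : μ = σ * α := by rw [hα]; field_simp
  subst hμ
  have hi1 : Integrable (fun t => t * stdNormalPDF t) := by
    simpa using integrable_pow_phi 1
  have hbound : Integrable (fun t => (σ*t+σ*α) * stdNormalPDF t) :=
    ((hi1.const_mul σ).add (integrable_phi.const_mul (σ*α))).congr
      (Eventually.of_forall fun t => by simp only [Pi.add_apply]; ring)
  have hmax : Integrable (fun t => (max 0 (σ*t+σ*α)) * stdNormalPDF t) := by
    refine (hbound.abs).mono' (Continuous.aestronglyMeasurable ?_) (Eventually.of_forall fun t => ?_)
    · exact (continuous_const.max ((continuous_const.mul continuous_id).add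
        continuous_const)).mul phi_cont
    · have h0 : 0 ≤ stdNormalPDF t := by unfold stdNormalPDF; positivity
      rw [Real.norm_of_nonneg (by positivity), abs_mul, abs_of_nonneg h0]
      exact mul_le_mul_of_nonneg_right (by
        rcases le_total 0 (σ*t+σ*α) with h | h
        · rw [max_eq_right h]; exact le_abs_self _
        · rw [max_eq_left h]; exact abs_nonneg _) h0
  have hsplit := intervalIntegral.integral_Iic_add_Ioi (b := -α) hmax.integrableOn hmax.integrableOn
  have hIic : ∫ t in Iic (-α), (max 0 (σ*t+σ*α)) * stdNormalPDF t = 0 := by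
    have he : EqOn (fun t => (max 0 (σ*t+σ*α)) * stdNormalPDF t) (fun _ => (0:ℝ)) (Iic (-α)) := by
      intro t ht
      have hle : σ*t+σ*α ≤ 0 := by
        have : σ * t ≤ σ * (-α) := mul_le_mul_of_nonneg_left ht hσ.le
        nlinarith
      simp [max_eq_left hle]
    rw [setIntegral_congr_fun measurableSet_Iic he, integral_zero]
  have hIoi : ∫ t in Ioi (-α), (max 0 (σ*t+σ*α)) * stdNormalPDF t
      = σ * (∫ t in Ioi (-α), t * stdNormalPDF t)
        + (σ*α) * (∫ t in Ioi (-α), stdNormalPDF t) := by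
    have hcong : ∫ t in Ioi (-α), (max 0 (σ*t+σ*α)) * stdNormalPDF t
        = ∫ t in Ioi (-α), (σ*(t*stdNormalPDF t) + (σ*α)*stdNormalPDF t) := by
      refine setIntegral_congr_fun measurableSet_Ioi fun t ht => ?_
      have hge : 0 ≤ σ*t+σ*α := by
        have : σ * (-α) ≤ σ * t := mul_le_mul_of_nonneg_left (le_of_lt ht) hσ.le
        nlinarith
      simp only [max_eq_right hge]
      ring
    rw [hcong, integral_add ((hi1.const_mul σ).integrableOn)
        ((integrable_phi.const_mul (σ*α)).integrableOn),
      integral_const_mul, integral_const_mul]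
  rw [int_t_phi_Ioi, int_phi_Ioi, neg_neg, phi_even] at hIoi
  rw [hIic, hIoi] at hsplit
  rw [← hsplit]
  ring

/-- For `X ~ N(μ, σ²)` with `σ > 0`, `α = μ/σ`, and `Z = max(0, X)`:
`E[Z²] = (μ² + σ²) Φ(α) + μσ φ(α)` and
`Var[Z] = (μ² + σ²) Φ(α) + μσ φ(α) − (σ φ(α) + μ Φ(α))²`. -/
theorem rectified_gaussian_variance
    (μ σ α : ℝ) (hσ : 0 < σ) (hα : α = μ / σ) :
    (∫ x, (max 0 x) ^ 2 ∂(gaussianReal μ ⟨σ ^ 2, sq_nonneg σ⟩)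
        = (μ ^ 2 + σ ^ 2) * stdNormalCDF α + μ * σ * stdNormalPDF α) ∧
    ((∫ x, (max 0 x) ^ 2 ∂(gaussianReal μ ⟨σ ^ 2, sq_nonneg σ⟩))
        - (∫ x, max 0 x ∂(gaussianReal μ ⟨σ ^ 2, sq_nonneg σ⟩)) ^ 2
      = (μ ^ 2 + σ ^ 2) * stdNormalCDF α + μ * σ * stdNormalPDF α
        - (σ * stdNormalPDF α + μ * stdNormalCDF α) ^ 2) := by
  have hmeas2 : Measurable (fun x : ℝ => (max 0 x)^2) :=
    (measurable_const.max measurable_id).pow_const 2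
  have hmeas1 : Measurable (fun x : ℝ => max 0 x) :=
    measurable_const.max measurable_id
  have e2 : ∫ x, (max 0 x) ^ 2 ∂(gaussianReal μ ⟨σ ^ 2, sq_nonneg σ⟩)
      = (μ ^ 2 + σ ^ 2) * stdNormalCDF α + μ * σ * stdNormalPDF α :=
    (integral_gauss μ σ hσ (fun x => (max 0 x)^2) hmeas2).trans (moment2 μ σ α hσ hα)
  have e1 : ∫ x, max 0 x ∂(gaussianReal μ ⟨σ ^ 2, sq_nonneg σ⟩)
      = σ * stdNormalPDF α + μ * stdNormalCDF α :=
    (integral_gauss μ σ hσ (fun x => max 0 x) hmeas1).trans (moment1 μ σ α hσ hα)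
  exact ⟨e2, by rw [e2, e1]⟩
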